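/- Let k ≥ 3, J > 0 and s : ZMod k → {−1,+1} with ∏_i s_i = −1, and let A be the k × k real matrix with A_{ii} = −2, A_{i,c(i)} = s_i J (c(i) = i+1 mod k) and all other entries 0. If J < 2/cos(π/k) then every complex eigenvalue of A has strictly negative real part; if J > 2/cos(π/k) then J e^{iπ/k} − 2 is an eigenvalue of A with strictly positive real part and strictly positive imaginary part (and its complex conjugate is also an eigenvalue). In particular, the fixed point (1/2,…,1/2) of the frustrated cyclic system loses linear stability exactly at J_c = 2/cos(π/k), through a conjugate pair of non-real eigenvalues crossing the imaginary axis (a Hopf bifurcation). -/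

import Mathlib

lemma root_re_le (k : ℕ) (hk : 1 ≤ k) (w : ℂ) (hw : w ^ k = -1) :
    w.re ≤ Real.cos (Real.pi / k) := by
  have habs : ‖w‖ = 1 := by
    have h1 : (‖w‖) ^ k = 1 := by
      rw [← norm_pow, hw]; simp
    have ha := norm_nonneg w
    rcases lt_trichotomy (‖w‖) 1 with h2 | h2 | h2
    · nlinarith [pow_lt_one₀ ha h2 (by omega : k ≠ 0)]
    · exact h2
    · nlinarith [one_lt_pow₀ h2 (by omega : k ≠ 0)]
  have hw' : Complex.exp (↑w.arg * Complex.I) = w := by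
    have := Complex.norm_mul_exp_arg_mul_I w
    rwa [habs, Complex.ofReal_one, one_mul] at this
  have hre : w.re = Real.cos w.arg := by
    conv_lhs => rw [← hw']
    rw [Complex.exp_mul_I]
    simp [Complex.cos_ofReal_re]
  have hexp : Complex.exp ((k : ℂ) * (↑w.arg * Complex.I)) = Complex.exp (↑Real.pi * Complex.I) := by
    rw [Complex.exp_nat_mul, hw', hw, Complex.exp_pi_mul_I]
  obtain ⟨n, hn⟩ := Complex.exp_eq_exp_iff_exists_int.mp hexp
  have hnim : (k : ℝ) * w.arg = Real.pi + n * (2 * Real.pi) := by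
    have := congrArg Complex.im hn
    simpa using this
  have hpi := Real.pi_pos
  have hkpos : (0:ℝ) < (k:ℝ) := by positivity
  have harg : w.arg = (2 * n + 1) * Real.pi / k := by
    field_simp
    linarith
  have hodd : (1:ℝ) ≤ |2 * (n:ℝ) + 1| := by
    have : (2 * n + 1 : ℤ) ≠ 0 := by omega
    have h1 : (1:ℤ) ≤ |2 * n + 1| := Int.one_le_abs this
    calc (1:ℝ) = ((1:ℤ):ℝ) := by norm_num
      _ ≤ ((|2 * n + 1| : ℤ) : ℝ) := by exact_mod_cast h1
      _ = |2 * (n:ℝ) + 1| := by push_cast; rw [abs_eq_abs]; left; ring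
  have hlb : Real.pi / k ≤ |w.arg| := by
    rw [harg, abs_div, abs_mul, abs_of_pos hpi, abs_of_pos hkpos]
    gcongr
    nlinarith [hodd, hpi]
  calc w.re = Real.cos |w.arg| := by rw [hre, Real.cos_abs]
    _ ≤ Real.cos (Real.pi / k) :=
      Real.cos_le_cos_of_nonneg_of_le_pi (by positivity) (Complex.abs_arg_le_pi w) hlb

/-- The Jacobian matrix at `(1/2,…,1/2)` of the cyclic-interaction field:
`A_{ii} = −2`, `A_{i,i+1} = s_i J`, all other entries `0`. -/
noncomputable def cycA (k : ℕ) (J : ℝ) (s : ZMod k → ℝ) :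
    Matrix (ZMod k) (ZMod k) ℝ :=
  Matrix.of fun i j => if j = i then -2 else if j = i + 1 then s i * J else 0

lemma prod_zmod {k : ℕ} [NeZero k] (f : ZMod k → ℂ) :
    ∏ j ∈ Finset.range k, f (j : ZMod k) = ∏ i : ZMod k, f i := by
  refine Finset.prod_nbij (fun j => (j : ZMod k)) ?_ ?_ ?_ ?_
  · intro a _; exact Finset.mem_univ _
  · intro a ha b hb hab
    have := congrArg ZMod.val hab
    rwa [ZMod.val_cast_of_lt (Finset.mem_range.mp ha),
      ZMod.val_cast_of_lt (Finset.mem_range.mp hb)] at this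
  · intro i _
    exact ⟨i.val, Finset.mem_range.mpr (ZMod.val_lt i), ZMod.natCast_rightInverse i⟩
  · intro a _; rfl

lemma mulVec_cycA {k : ℕ} [NeZero k] (hk : 3 ≤ k) (J : ℝ) (s : ZMod k → ℝ)
    (v : ZMod k → ℂ) (i : ZMod k) :
    ((cycA k J s).map (fun a => (a : ℂ))).mulVec v i
      = -2 * v i + (s i : ℂ) * J * v (i + 1) := by
  haveI : Fact (1 < k) := ⟨by omega⟩
  have hne : i ≠ i + 1 := by
    intro h
    have : (1 : ZMod k) = 0 := by
      have := congrArg (fun x => x - i) h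
      simpa using this.symm
    exact one_ne_zero this
  have hsplit : ∀ j, ((cycA k J s).map (fun a => (a : ℂ))) i j * v j
      = (if j = i then (-2) * v i else 0) + (if j = i + 1 then (s i : ℂ) * J * v (i+1) else 0) := by
    intro j
    by_cases h1 : j = i
    · subst h1
      simp [cycA, Matrix.map_apply, hne, Ne.symm hne]
    · by_cases h2 : j = i + 1
      · subst h2
        simp [cycA, Matrix.map_apply, Ne.symm hne]
      · simp [cycA, Matrix.map_apply, h1, h2]
  rw [Matrix.mulVec, dotProduct]
  simp only [hsplit]
  rw [Finset.sum_add_distrib, Finset.sum_ite_eq' Finset.univ i, Finset.sum_ite_eq' Finset.univ (i+1)]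
  simp

lemma eig_of_root {k : ℕ} [NeZero k] (hk : 3 ≤ k) (J : ℝ) (hJ : 0 < J)
    (s : ZMod k → ℝ) (hs : ∀ i, s i = 1 ∨ s i = -1)
    (hprod : ∏ i : ZMod k, s i = -1) (ζ : ℂ) (hζ : ζ ^ k = -1) :
    Module.End.HasEigenvalue
      (Matrix.toLin' ((cycA k J s).map (fun a => (a : ℂ))))
      ((J : ℂ) * ζ - 2) := by
  haveI : Fact (1 < k) := ⟨by omega⟩
  set u : ℕ → ℂ := fun n => ζ ^ n * ∏ j ∈ Finset.range n, (s (j : ZMod k) : ℂ) with hu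
  have hustep : ∀ n : ℕ, u (n + 1) = (s (n : ZMod k) : ℂ) * ζ * u n := by
    intro n
    simp only [hu, Finset.prod_range_succ, pow_succ]
    ring
  have huk : u k = 1 := by
    have : ∏ j ∈ Finset.range k, (s (j : ZMod k) : ℂ) = -1 := by
      rw [prod_zmod (fun i => (s i : ℂ))]
      rw [← Complex.ofReal_prod, hprod]; norm_num
    simp [hu, this, hζ]
  set v : ZMod k → ℂ := fun i => u i.val with hv
  have hvstep : ∀ i : ZMod k, v (i + 1) = (s i : ℂ) * ζ * v i := by
    intro i
    have hival : ((i.val : ZMod k)) = i := ZMod.natCast_rightInverse i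
    have hlt := ZMod.val_lt i
    have hstep' : u (i.val + 1) = (s i : ℂ) * ζ * u i.val := by
      have h2 := hustep i.val
      rwa [hival] at h2
    by_cases h : i.val + 1 < k
    · have h1 : (i + 1).val = i.val + 1 := by
        have hv1 : (1 : ZMod k).val = 1 := ZMod.val_one k
        rw [ZMod.val_add_of_lt (by omega)]
        omega
      show u (i + 1).val = _
      rw [h1, hstep']
    · have hik : i.val + 1 = k := by omega
      have h0 : i + 1 = 0 := by
        rw [← hival, ← Nat.cast_one, ← Nat.cast_add, hik, ZMod.natCast_self]
      have h1 : u (i.val + 1) = 1 := by rw [hik, huk]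
      show u (i + 1).val = _
      rw [h0, ZMod.val_zero]
      have : u 0 = 1 := by simp [hu]
      rw [this, ← h1, hstep']
  have hv0 : v 0 = 1 := by simp [hv, hu, ZMod.val_zero]
  apply Module.End.hasEigenvalue_of_hasEigenvector (x := v)
  constructor
  · rw [Module.End.mem_eigenspace_iff, Matrix.toLin'_apply]
    funext i
    rw [mulVec_cycA hk J s v i, hvstep i, Pi.smul_apply, smul_eq_mul]
    have hs2 : (s i : ℂ) * (s i : ℂ) = 1 := by
      rcases hs i with h | h <;> simp [h]
    linear_combination (J : ℂ) * ζ * v i * hs2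
  · intro h
    have := congrFun h 0
    rw [hv0] at this
    simp at this

lemma eig_root {k : ℕ} [NeZero k] (hk : 3 ≤ k) (J : ℝ) (hJ : 0 < J)
    (s : ZMod k → ℝ) (hs : ∀ i, s i = 1 ∨ s i = -1)
    (hprod : ∏ i : ZMod k, s i = -1) (z : ℂ)
    (hz : Module.End.HasEigenvalue
      (Matrix.toLin' ((cycA k J s).map (fun a => (a : ℂ)))) z) :
    ((z + 2) / J) ^ k = -1 := by
  obtain ⟨v, hv1, hv2⟩ := hz.exists_hasEigenvector
  rw [Module.End.mem_eigenspace_iff, Matrix.toLin'_apply] at hv1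
  have key : ∀ i : ZMod k, (s i : ℂ) * J * v (i + 1) = (z + 2) * v i := by
    intro i
    have := congrFun hv1 i
    rw [mulVec_cycA hk J s v i] at this
    rw [Pi.smul_apply, smul_eq_mul] at this
    linear_combination this
  obtain ⟨i0, hi0⟩ := Function.ne_iff.mp hv2
  simp only [Pi.zero_apply] at hi0
  have hiter : ∀ n : ℕ, (z + 2) ^ n * v i0
      = (J : ℂ) ^ n * (∏ m ∈ Finset.range n, (s (i0 + m) : ℂ)) * v (i0 + n) := by
    intro n
    induction n with
    | zero => simp
    | succ n ih =>
      have hcast : ((n + 1 : ℕ) : ZMod k) = (n : ZMod k) + 1 := by push_cast; ring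
      rw [Finset.prod_range_succ, hcast, ← add_assoc]
      have hkey := key (i0 + n)
      calc (z + 2) ^ (n + 1) * v i0 = (z + 2) * ((z + 2) ^ n * v i0) := by ring
        _ = (z + 2) * ((J : ℂ) ^ n * (∏ m ∈ Finset.range n, (s (i0 + m) : ℂ)) * v (i0 + n)) := by rw [ih]
        _ = (J : ℂ) ^ n * (∏ m ∈ Finset.range n, (s (i0 + m) : ℂ)) * ((z + 2) * v (i0 + n)) := by ring
        _ = (J : ℂ) ^ n * (∏ m ∈ Finset.range n, (s (i0 + m) : ℂ)) * ((s (i0 + n) : ℂ) * J * v (i0 + n + 1)) := by rw [hkey]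
        _ = (J : ℂ) ^ (n + 1) * ((∏ m ∈ Finset.range n, (s (i0 + m) : ℂ)) * (s (i0 + n) : ℂ)) * v (i0 + n + 1) := by ring
  have hk0 : (i0 + (k : ZMod k)) = i0 := by rw [ZMod.natCast_self, add_zero]
  have hprodk : (∏ m ∈ Finset.range k, (s (i0 + m) : ℂ)) = -1 := by
    rw [prod_zmod (fun j => (s (i0 + j) : ℂ))]
    have hcomp := Equiv.prod_comp (Equiv.addLeft i0) (fun i => (s i : ℂ))
    simp only [Equiv.coe_addLeft] at hcomp
    rw [hcomp]
    rw [← Complex.ofReal_prod, hprod]; norm_num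
  have hfin := hiter k
  rw [hk0, hprodk] at hfin
  have hJ0 : (J : ℂ) ≠ 0 := by exact_mod_cast ne_of_gt hJ
  have heq : (z + 2) ^ k = -(J : ℂ) ^ k := by
    have := mul_right_cancel₀ hi0 (by linear_combination hfin :
      (z + 2) ^ k * v i0 = (-(J : ℂ) ^ k) * v i0)
    exact this
  rw [div_pow, heq, neg_div, div_self (pow_ne_zero k hJ0)]

/-- Frustrated case `∏ s_i = −1`, `k ≥ 3`: if `J < 2/cos(π/k)` every eigenvalue
of `A` has strictly negative real part; if `J > 2/cos(π/k)` then
`J e^{iπ/k} − 2` is an eigenvalue with strictly positive real and imaginary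
parts, and its complex conjugate is also an eigenvalue (Hopf bifurcation at
`J_c = 2/cos(π/k)`). -/
theorem statement13 (k : ℕ) [NeZero k] (hk : 3 ≤ k) (J : ℝ) (hJ : 0 < J)
    (s : ZMod k → ℝ) (hs : ∀ i, s i = 1 ∨ s i = -1)
    (hprod : ∏ i : ZMod k, s i = -1) :
    (J < 2 / Real.cos (Real.pi / k) →
      ∀ z : ℂ,
        Module.End.HasEigenvalue
          (Matrix.toLin' ((cycA k J s).map (fun a => (a : ℂ)))) z →
        z.re < 0) ∧
    (2 / Real.cos (Real.pi / k) < J →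
      Module.End.HasEigenvalue
        (Matrix.toLin' ((cycA k J s).map (fun a => (a : ℂ))))
        ((J : ℂ) * Complex.exp (Complex.I * (Real.pi / k)) - 2) ∧
      0 < ((J : ℂ) * Complex.exp (Complex.I * (Real.pi / k)) - 2).re ∧
      0 < ((J : ℂ) * Complex.exp (Complex.I * (Real.pi / k)) - 2).im ∧
      Module.End.HasEigenvalue
        (Matrix.toLin' ((cycA k J s).map (fun a => (a : ℂ))))
        ((starRingEnd ℂ)
          ((J : ℂ) * Complex.exp (Complex.I * (Real.pi / k)) - 2))) := by
  have hpi := Real.pi_pos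
  have hk3 : (3:ℝ) ≤ (k:ℝ) := by exact_mod_cast hk
  have hcos : 0 < Real.cos (Real.pi / k) := by
    apply Real.cos_pos_of_mem_Ioo
    constructor
    · have : 0 < Real.pi / k := by positivity
      linarith
    · have h1 : Real.pi / k ≤ Real.pi / 3 := by gcongr
      linarith
  set ζ : ℂ := Complex.exp (Complex.I * (Real.pi / k)) with hζ
  have hζk : ζ ^ k = -1 := by
    have hk0 : (k:ℂ) ≠ 0 := by exact_mod_cast (by omega : k ≠ 0)
    rw [hζ, ← Complex.exp_nat_mul]
    have : (k:ℂ) * (Complex.I * (Real.pi / k)) = Real.pi * Complex.I := by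
      field_simp
    rw [this, Complex.exp_pi_mul_I]
  have h1 : Complex.I * ((Real.pi : ℂ) / k) = ((Real.pi / k : ℝ) : ℂ) * Complex.I := by
    push_cast; ring
  have hexp : ζ = ((Real.cos (Real.pi / k) : ℝ) : ℂ) + ((Real.sin (Real.pi / k) : ℝ) : ℂ) * Complex.I := by
    rw [hζ, h1, Complex.exp_mul_I, Complex.ofReal_cos, Complex.ofReal_sin]
  have hre : ((J : ℂ) * ζ - 2).re = J * Real.cos (Real.pi / k) - 2 := by
    rw [hexp]
    simp only [Complex.sub_re, Complex.add_re, Complex.mul_re, Complex.mul_im,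
      Complex.ofReal_re, Complex.ofReal_im, Complex.I_re, Complex.I_im]
    norm_num
  have him : ((J : ℂ) * ζ - 2).im = J * Real.sin (Real.pi / k) := by
    rw [hexp]
    simp only [Complex.sub_im, Complex.add_im, Complex.mul_re, Complex.mul_im,
      Complex.ofReal_re, Complex.ofReal_im, Complex.I_re, Complex.I_im]
    norm_num
  constructor
  · intro hJlt z hz
    have hw := eig_root hk J hJ s hs hprod z hz
    have hre' := root_re_le k (by omega) _ hw
    have hJ0 : (J:ℂ) ≠ 0 := by exact_mod_cast ne_of_gt hJ
    have hzw : z + 2 = (J:ℂ) * ((z+2)/J) := by field_simp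
    have hz2 : z.re + 2 = J * ((z+2)/J).re := by
      have h := congrArg Complex.re hzw
      rw [Complex.re_ofReal_mul] at h
      simpa using h
    have hJc : J * Real.cos (Real.pi / k) < 2 := (lt_div_iff₀ hcos).mp hJlt
    nlinarith [mul_le_mul_of_nonneg_left hre' hJ.le]
  · intro hJgt
    have hJc : 2 < J * Real.cos (Real.pi / k) := (div_lt_iff₀ hcos).mp hJgt
    refine ⟨eig_of_root hk J hJ s hs hprod ζ hζk, ?_, ?_, ?_⟩
    · rw [hre]; linarith
    · rw [him]
      have hsin : 0 < Real.sin (Real.pi / k) := by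
        apply Real.sin_pos_of_pos_of_lt_pi
        · positivity
        · have h1 : Real.pi / k ≤ Real.pi / 3 := by gcongr
          linarith
      positivity
    · have hconj : (starRingEnd ℂ) ((J : ℂ) * ζ - 2)
          = (J : ℂ) * ((starRingEnd ℂ) ζ) - 2 := by
        rw [map_sub, map_mul, Complex.conj_ofReal, map_ofNat]
      rw [hconj]
      apply eig_of_root hk J hJ s hs hprod
      rw [← map_pow, hζk]
      simp
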